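/- Let z, z' ∈ ℝ^k. Consider the randomized rounding scheme with grid side length β > 0: draw independent uniform offsets o_1,...,o_k ∈ [0,β] and thresholds u_1,...,u_k ∈ [0,1]; round each coordinate z[i] down to the grid point below it with probability p(z)[i] (chosen so the expectation equals z[i]) and up otherwise, using the threshold u_i. Then the probability (over the shared offsets and thresholds) that the rounded vectors of z and z' differ is at most 2β^{-1}·‖z − z'‖₁. -/

import Mathlib

open MeasureTheory Set

/-- The uniform probability measure on the interval `[a, b]`. -/
noncomputable def unifMeas (a b : ℝ) : Measure ℝ :=
  (ENNReal.ofReal (b - a))⁻¹ • volume.restrict (Icc a b)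

/-- The largest grid point `o + jβ` (for `j : ℤ`) that is `≤ x`. -/
noncomputable def gridFloor (β o x : ℝ) : ℝ := o + β * ⌊(x - o) / β⌋

/-- The probability `p` of rounding `x` down, chosen so
`p * gridFloor + (1 - p) * (gridFloor + β) = x`. -/
noncomputable def roundProb (β o x : ℝ) : ℝ := (gridFloor β o x + β - x) / β

/-- The Alon–Klartag randomized rounding of `z` with offsets `o` and thresholds `u`:
coordinate `i` rounds down to `gridFloor β (o i) (z i)` if `u i ≤ roundProb β (o i) (z i)`,
and up to `gridFloor β (o i) (z i) + β` otherwise. -/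
noncomputable def akRound (k : ℕ) (β : ℝ) (o u : Fin k → ℝ) (z : Fin k → ℝ) :
    Fin k → ℝ := fun i =>
  if u i ≤ roundProb β (o i) (z i) then gridFloor β (o i) (z i)
  else gridFloor β (o i) (z i) + β

lemma unifMeas_apply (a b : ℝ) (s : Set ℝ) :
    unifMeas a b s = (ENNReal.ofReal (b - a))⁻¹ * volume (s ∩ Icc a b) := by
  rw [unifMeas, Measure.smul_apply, Measure.restrict_apply' measurableSet_Icc, smul_eq_mul]

lemma unifMeas_univ {a b : ℝ} (h : a < b) : unifMeas a b univ = 1 := by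
  rw [unifMeas_apply, univ_inter, Real.volume_Icc]
  exact ENNReal.inv_mul_cancel (by simp; linarith) ENNReal.ofReal_ne_top

lemma unifMeas_prob {a b : ℝ} (h : a < b) : IsProbabilityMeasure (unifMeas a b) :=
  ⟨unifMeas_univ h⟩

lemma measurable_gridFloor (β x : ℝ) : Measurable fun o => gridFloor β o x := by
  unfold gridFloor
  exact measurable_id.add ((measurable_from_top.comp (Measurable.floor ((measurable_const.sub measurable_id).div_const β))).const_mul β)

lemma measurable_roundProb (β x : ℝ) : Measurable fun o => roundProb β o x := by
  unfold roundProb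
  exact (((measurable_gridFloor β x).add_const β).sub_const x).div_const β

lemma floor_ne_subset {β x y : ℝ} (hβ : 0 < β) (hxy : x ≤ y) :
    {o : ℝ | gridFloor β o x ≠ gridFloor β o y} ⊆
      ⋃ j : ℤ, Ioc (x - β * j) (y - β * j) := by
  intro o ho
  simp only [mem_setOf_eq, gridFloor] at ho
  have hfne : ⌊(x - o) / β⌋ ≠ ⌊(y - o) / β⌋ := by
    intro h; apply ho; rw [h]
  have hmono : ⌊(x - o) / β⌋ ≤ ⌊(y - o) / β⌋ := by
    apply Int.floor_mono; gcongr <;> linarith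
  have hlt : ⌊(x - o) / β⌋ < ⌊(y - o) / β⌋ := lt_of_le_of_ne hmono hfne
  set j : ℤ := ⌊(y - o) / β⌋ with hj
  refine mem_iUnion.2 ⟨j, ⟨?_, ?_⟩⟩
  · have h1 : ((⌊(x - o) / β⌋ : ℤ) : ℝ) + 1 ≤ (j : ℝ) := by exact_mod_cast hlt
    have h2 : (x - o) / β < (j : ℝ) := lt_of_lt_of_le (Int.lt_floor_add_one _) h1
    have := (div_lt_iff₀ hβ).mp h2
    linarith [this]
  · have h2 : (j : ℝ) ≤ (y - o) / β := Int.floor_le _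
    have := (le_div_iff₀ hβ).mp h2
    linarith [this]

lemma unifMeas_floor_ne {β x y : ℝ} (hβ : 0 < β) (hxy : x ≤ y) :
    unifMeas 0 β {o : ℝ | gridFloor β o x ≠ gridFloor β o y} ≤
      ENNReal.ofReal ((y - x) / β) := by
  rcases le_or_gt β (y - x) with h | h
  · calc unifMeas 0 β {o : ℝ | gridFloor β o x ≠ gridFloor β o y}
        ≤ unifMeas 0 β univ := measure_mono (subset_univ _)
      _ = 1 := unifMeas_univ hβ
      _ ≤ ENNReal.ofReal ((y - x) / β) := by
          rw [← ENNReal.ofReal_one]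
          exact ENNReal.ofReal_le_ofReal (by rw [le_div_iff₀ hβ]; linarith)
  · rw [unifMeas_apply]
    have key : volume ({o : ℝ | gridFloor β o x ≠ gridFloor β o y} ∩ Icc 0 β)
        ≤ ENNReal.ofReal (y - x) := by
      calc volume ({o : ℝ | gridFloor β o x ≠ gridFloor β o y} ∩ Icc 0 β)
          ≤ volume ((⋃ j : ℤ, Ioc (x - β * j) (y - β * j)) ∩ Icc 0 β) := by
            exact measure_mono (inter_subset_inter_left _ (floor_ne_subset hβ hxy))
        _ = volume (⋃ j : ℤ, (Ioc (x - β * j) (y - β * j) ∩ Icc 0 β)) := by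
            rw [iUnion_inter]
        _ ≤ ∑' j : ℤ, volume (Ioc (x - β * j) (y - β * j) ∩ Icc 0 β) :=
            measure_iUnion_le _
        _ ≤ ∑' j : ℤ, volume (Ioc x y ∩ Ioc (β * j) (β * j + β)) := by
            apply ENNReal.tsum_le_tsum
            intro j
            have hsub : Ioc (x - β * j) (y - β * j) ∩ Icc 0 β ⊆
                Icc (max (x - β * j) 0) (min (y - β * j) β) := by
              intro t ht
              exact ⟨max_le ht.1.1.le ht.2.1, le_min ht.1.2 ht.2.2⟩
            calc volume (Ioc (x - β * j) (y - β * j) ∩ Icc 0 β)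
                ≤ volume (Icc (max (x - β * j) 0) (min (y - β * j) β)) :=
                  measure_mono hsub
              _ = ENNReal.ofReal (min (y - β * j) β - max (x - β * j) 0) := Real.volume_Icc
              _ = volume (Ioc x y ∩ Ioc (β * j) (β * j + β)) := by
                  rw [Set.Ioc_inter_Ioc, Real.volume_Ioc]
                  congr 1
                  simp only [min_def, max_def]
                  split_ifs <;> linarith
        _ = volume (⋃ j : ℤ, (Ioc x y ∩ Ioc (β * j) (β * j + β))) := by
            rw [measure_iUnion]
            · intro j j' hne
              apply Disjoint.mono inter_subset_right inter_subset_right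
              rw [Set.Ioc_disjoint_Ioc]
              rcases hne.lt_or_gt with hlt | hlt
              · have : (j : ℝ) + 1 ≤ (j' : ℝ) := by exact_mod_cast hlt
                refine le_trans (min_le_left _ _) (le_trans ?_ (le_max_right _ _))
                nlinarith
              · have : (j' : ℝ) + 1 ≤ (j : ℝ) := by exact_mod_cast hlt
                refine le_trans (min_le_right _ _) (le_trans ?_ (le_max_left _ _))
                nlinarith
            · exact fun j => measurableSet_Ioc.inter measurableSet_Ioc
        _ ≤ volume (Ioc x y) := measure_mono (iUnion_subset fun j => inter_subset_left)
        _ = ENNReal.ofReal (y - x) := Real.volume_Ioc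
    calc (ENNReal.ofReal (β - 0))⁻¹ * volume ({o : ℝ | gridFloor β o x ≠ gridFloor β o y} ∩ Icc 0 β)
        ≤ (ENNReal.ofReal (β - 0))⁻¹ * ENNReal.ofReal (y - x) := by gcongr
      _ = ENNReal.ofReal ((y - x) / β) := by
          rw [ENNReal.ofReal_div_of_pos hβ, ENNReal.div_eq_inv_mul, sub_zero]

lemma pi_eval_apply {k : ℕ} (μ : Fin k → Measure ℝ) [∀ i, SigmaFinite (μ i)]
    (h1 : ∀ j, μ j univ = 1) (i : Fin k) (s : Set ℝ) :
    Measure.pi μ (Function.eval i ⁻¹' s) = μ i s := by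
  have hset : Function.eval i ⁻¹' s =
      Set.pi univ (Function.update (fun _ : Fin k => (univ : Set ℝ)) i s) := by
    ext x
    simp only [mem_preimage, Function.eval, Set.mem_pi, mem_univ, forall_true_left]
    constructor
    · intro hx j
      rcases eq_or_ne j i with rfl | hne
      · simpa using hx
      · simp [Function.update_of_ne hne]
    · intro hx
      simpa using hx i
  rw [hset, Measure.pi_pi, Finset.prod_eq_single i]
  · simp
  · intro j _ hne
    simp [Function.update_of_ne hne, h1 j]
  · simp

lemma unifMeas01_Ioc (m M : ℝ) :
    unifMeas 0 1 (Ioc m M) ≤ ENNReal.ofReal (M - m) := by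
  rw [unifMeas_apply]
  simp only [sub_zero, ENNReal.ofReal_one, inv_one, one_mul]
  calc volume (Ioc m M ∩ Icc 0 1) ≤ volume (Ioc m M) := measure_mono inter_subset_left
    _ = ENNReal.ofReal (M - m) := Real.volume_Ioc

lemma roundProb_gap {β o x y : ℝ} (hβ : 0 < β)
    (hg : gridFloor β o x = gridFloor β o y) :
    max (roundProb β o x) (roundProb β o y) - min (roundProb β o x) (roundProb β o y)
      = |x - y| / β := by
  rw [max_sub_min_eq_abs]
  unfold roundProb
  rw [hg, div_sub_div_same, abs_div, abs_of_pos hβ]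
  congr 1
  rw [show gridFloor β o y + β - y - (gridFloor β o y + β - x) = x - y by ring]

def Aev (k : ℕ) (β : ℝ) (z z' : Fin k → ℝ) (i : Fin k) :
    Set ((Fin k → ℝ) × (Fin k → ℝ)) :=
  {p | gridFloor β (p.1 i) (z i) ≠ gridFloor β (p.1 i) (z' i)}

def Bev (k : ℕ) (β : ℝ) (z z' : Fin k → ℝ) (i : Fin k) :
    Set ((Fin k → ℝ) × (Fin k → ℝ)) :=
  {p | gridFloor β (p.1 i) (z i) = gridFloor β (p.1 i) (z' i) ∧
    min (roundProb β (p.1 i) (z i)) (roundProb β (p.1 i) (z' i)) < p.2 i ∧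
    p.2 i ≤ max (roundProb β (p.1 i) (z i)) (roundProb β (p.1 i) (z' i))}

lemma event_subset (k : ℕ) (β : ℝ) (z z' : Fin k → ℝ) :
    {p : (Fin k → ℝ) × (Fin k → ℝ) |
        akRound k β p.1 p.2 z ≠ akRound k β p.1 p.2 z'} ⊆
      ⋃ i, (Aev k β z z' i ∪ Bev k β z z' i) := by
  intro p hp
  obtain ⟨i, hi⟩ := Function.ne_iff.mp hp
  simp only [akRound] at hi
  by_cases hg : gridFloor β (p.1 i) (z i) = gridFloor β (p.1 i) (z' i)
  · refine mem_iUnion.2 ⟨i, Or.inr ⟨hg, ?_⟩⟩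
    by_cases h1 : p.2 i ≤ roundProb β (p.1 i) (z i)
    · by_cases h2 : p.2 i ≤ roundProb β (p.1 i) (z' i)
      · rw [if_pos h1, if_pos h2] at hi; exact absurd hg hi
      · exact ⟨lt_of_le_of_lt (min_le_right _ _) (not_le.mp h2),
          le_trans h1 (le_max_left _ _)⟩
    · by_cases h2 : p.2 i ≤ roundProb β (p.1 i) (z' i)
      · exact ⟨lt_of_le_of_lt (min_le_left _ _) (not_le.mp h1),
          le_trans h2 (le_max_right _ _)⟩
      · rw [if_neg h1, if_neg h2] at hi; exact absurd (by rw [hg]) hi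
  · exact mem_iUnion.2 ⟨i, Or.inl hg⟩

theorem stmt0 (k : ℕ) (β : ℝ) (hβ : 0 < β) (z z' : Fin k → ℝ) :
    ((Measure.pi (fun _ : Fin k => unifMeas 0 β)).prod
        (Measure.pi (fun _ : Fin k => unifMeas 0 1)))
        {p : (Fin k → ℝ) × (Fin k → ℝ) |
          akRound k β p.1 p.2 z ≠ akRound k β p.1 p.2 z'}
      ≤ ENNReal.ofReal (2 / β * ∑ i, |z i - z' i|) := by
  haveI hpβ : IsProbabilityMeasure (unifMeas 0 β) := unifMeas_prob hβ
  haveI hp1 : IsProbabilityMeasure (unifMeas 0 1) := unifMeas_prob one_pos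
  set P : Measure (Fin k → ℝ) := Measure.pi (fun _ : Fin k => unifMeas 0 β) with hP
  set Q : Measure (Fin k → ℝ) := Measure.pi (fun _ : Fin k => unifMeas 0 1) with hQ
  have hA : ∀ i, (P.prod Q) (Aev k β z z' i) ≤ ENNReal.ofReal (|z i - z' i| / β) := by
    intro i
    have hset : Aev k β z z' i =
        (Function.eval i ⁻¹' {o : ℝ | gridFloor β o (z i) ≠ gridFloor β o (z' i)}) ×ˢ
          (univ : Set (Fin k → ℝ)) := by
      ext p; simp [Aev, Set.mem_prod, Function.eval]
    rw [hset, Measure.prod_prod, measure_univ, mul_one, hP,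
      pi_eval_apply _ (fun j => unifMeas_univ hβ) i]
    rcases le_total (z i) (z' i) with hle | hle
    · have h := unifMeas_floor_ne hβ hle
      rwa [abs_sub_comm, abs_of_nonneg (by linarith)]
    · have h := unifMeas_floor_ne hβ hle
      have hset2 : {o : ℝ | gridFloor β o (z i) ≠ gridFloor β o (z' i)} =
          {o : ℝ | gridFloor β o (z' i) ≠ gridFloor β o (z i)} := by
        ext o; simp [ne_comm]
      rwa [hset2, abs_of_nonneg (by linarith)]
  have hB : ∀ i, (P.prod Q) (Bev k β z z' i) ≤ ENNReal.ofReal (|z i - z' i| / β) := by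
    intro i
    have m1 : Measurable fun p : (Fin k → ℝ) × (Fin k → ℝ) => gridFloor β (p.1 i) (z i) :=
      (measurable_gridFloor β (z i)).comp ((measurable_pi_apply i).comp measurable_fst)
    have m2 : Measurable fun p : (Fin k → ℝ) × (Fin k → ℝ) => gridFloor β (p.1 i) (z' i) :=
      (measurable_gridFloor β (z' i)).comp ((measurable_pi_apply i).comp measurable_fst)
    have mp1 : Measurable fun p : (Fin k → ℝ) × (Fin k → ℝ) => roundProb β (p.1 i) (z i) :=
      (measurable_roundProb β (z i)).comp ((measurable_pi_apply i).comp measurable_fst)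
    have mp2 : Measurable fun p : (Fin k → ℝ) × (Fin k → ℝ) => roundProb β (p.1 i) (z' i) :=
      (measurable_roundProb β (z' i)).comp ((measurable_pi_apply i).comp measurable_fst)
    have mu : Measurable fun p : (Fin k → ℝ) × (Fin k → ℝ) => p.2 i :=
      (measurable_pi_apply i).comp measurable_snd
    have hBm : MeasurableSet (Bev k β z z' i) := by
      have : Bev k β z z' i =
          {p : (Fin k → ℝ) × (Fin k → ℝ) | gridFloor β (p.1 i) (z i) = gridFloor β (p.1 i) (z' i)} ∩
          ({p : (Fin k → ℝ) × (Fin k → ℝ) |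
              min (roundProb β (p.1 i) (z i)) (roundProb β (p.1 i) (z' i)) < p.2 i} ∩
           {p : (Fin k → ℝ) × (Fin k → ℝ) |
              p.2 i ≤ max (roundProb β (p.1 i) (z i)) (roundProb β (p.1 i) (z' i))}) := by
        ext p; simp [Bev, and_assoc]
      rw [this]
      exact (measurableSet_eq_fun m1 m2).inter
        ((measurableSet_lt (mp1.min mp2) mu).inter (measurableSet_le mu (mp1.max mp2)))
    rw [Measure.prod_apply hBm]
    calc ∫⁻ ov, Q (Prod.mk ov ⁻¹' Bev k β z z' i) ∂P
        ≤ ∫⁻ _, ENNReal.ofReal (|z i - z' i| / β) ∂P := by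
          apply lintegral_mono
          intro ov
          show Q (Prod.mk ov ⁻¹' Bev k β z z' i) ≤ ENNReal.ofReal (|z i - z' i| / β)
          by_cases hg : gridFloor β (ov i) (z i) = gridFloor β (ov i) (z' i)
          · have hsl : Prod.mk ov ⁻¹' Bev k β z z' i =
                Function.eval i ⁻¹' (Ioc
                  (min (roundProb β (ov i) (z i)) (roundProb β (ov i) (z' i)))
                  (max (roundProb β (ov i) (z i)) (roundProb β (ov i) (z' i)))) := by
              ext uv; simp [Bev, hg, Function.eval, mem_Ioc]
            rw [hsl, hQ, pi_eval_apply _ (fun j => unifMeas_univ one_pos) i]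
            calc unifMeas 0 1 _ ≤ ENNReal.ofReal
                  (max (roundProb β (ov i) (z i)) (roundProb β (ov i) (z' i)) -
                   min (roundProb β (ov i) (z i)) (roundProb β (ov i) (z' i))) :=
                unifMeas01_Ioc _ _
              _ = ENNReal.ofReal (|z i - z' i| / β) := by rw [roundProb_gap hβ hg]
          · have hsl : Prod.mk ov ⁻¹' Bev k β z z' i = ∅ := by
              ext uv; simp [Bev, hg]
            rw [hsl]; simp
      _ = ENNReal.ofReal (|z i - z' i| / β) := by
          rw [lintegral_const, measure_univ, mul_one]
  calc ((P.prod Q)) {p : (Fin k → ℝ) × (Fin k → ℝ) |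
          akRound k β p.1 p.2 z ≠ akRound k β p.1 p.2 z'}
      ≤ (P.prod Q) (⋃ i, (Aev k β z z' i ∪ Bev k β z z' i)) :=
        measure_mono (event_subset k β z z')
    _ ≤ ∑' i, (P.prod Q) (Aev k β z z' i ∪ Bev k β z z' i) := measure_iUnion_le _
    _ ≤ ∑' i : Fin k, (ENNReal.ofReal (|z i - z' i| / β) + ENNReal.ofReal (|z i - z' i| / β)) :=
        ENNReal.tsum_le_tsum fun i =>
          le_trans (measure_union_le _ _) (add_le_add (hA i) (hB i))
    _ = ∑ i, (ENNReal.ofReal (|z i - z' i| / β) + ENNReal.ofReal (|z i - z' i| / β)) :=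
        tsum_fintype _
    _ = ENNReal.ofReal (2 / β * ∑ i, |z i - z' i|) := by
        rw [Finset.mul_sum, ENNReal.ofReal_sum_of_nonneg
          (fun i _ => by positivity)]
        apply Finset.sum_congr rfl
        intro i _
        rw [← ENNReal.ofReal_add (by positivity) (by positivity)]
        congr 1
        field_simp
        ring
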